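/- arXiv:2108.01525 — 2 statements merged into one kernel-verified Lean document; each statement's English description precedes it below -/
import Mathlib

section
/- Let M ∈ ℝ^{p×n}, λ > 0, and let (v*, w*) be any maximizer over (v,w) in the product of the closed unit Euclidean balls of ℝ^p and ℝ^n of the objective ⟨M, vwᵀ⟩ − λ‖v‖₁. If ‖M‖_{2→∞} > λ, then v* = soft(Mw*, λ)/‖soft(Mw*, λ)‖₂ and w* = Mᵀv*/‖Mᵀv*‖₂ (in particular soft(Mw*,λ) ≠ 0 and Mᵀv* ≠ 0). -/
open MeasureTheory ProbabilityTheory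

noncomputable section

namespace MissInspect

/-- Euclidean (ℓ²) norm of a finite-dimensional real vector. -/
def l2norm {d : ℕ} (v : Fin d → ℝ) : ℝ := Real.sqrt (∑ i, (v i) ^ 2)

/-- ℓ¹ norm. -/
def l1norm {d : ℕ} (v : Fin d → ℝ) : ℝ := ∑ i, |v i|

/-- ℓ∞ norm. -/
def linfNorm {d : ℕ} (v : Fin d → ℝ) : ℝ := ⨆ i, |v i|

/-- Euclidean inner product. -/
def dotp {d : ℕ} (u v : Fin d → ℝ) : ℝ := ∑ i, u i * v i

/-- Acute angle between two vectors. -/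
def angle {d : ℕ} (u v : Fin d → ℝ) : ℝ :=
  Real.arccos (|dotp u v| / (l2norm u * l2norm v))

/-- Entrywise (Hadamard) product of two `p × n` arrays. -/
def hadamard {p n : ℕ} (A B : Fin p → Fin n → ℝ) : Fin p → Fin n → ℝ :=
  fun j t => A j t * B j t

/-- Frobenius norm. -/
def frobNorm {p n : ℕ} (A : Fin p → Fin n → ℝ) : ℝ :=
  Real.sqrt (∑ j, ∑ t, (A j t) ^ 2)

/-- Number of nonzero coordinates. -/
def suppCard {d : ℕ} (v : Fin d → ℝ) : ℕ :=
  (Finset.univ.filter fun i => v i ≠ 0).card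

/-- `L_{j,t}`: number of observations among the first `t` time points in row `j`. -/
def Lcount {p n : ℕ} (Om : Fin p → Fin n → ℝ) (j : Fin p) (t : ℕ) : ℝ :=
  ∑ r : Fin n, if (r : ℕ) < t then Om j r else 0

/-- `R_{j,t}`: number of observations among the last `t` time points in row `j`. -/
def Rcount {p n : ℕ} (Om : Fin p → Fin n → ℝ) (j : Fin p) (t : ℕ) : ℝ :=
  ∑ r : Fin n, if n - t ≤ (r : ℕ) then Om j r else 0

/-- The MissCUSUM transformation.  The column index `t : Fin (n-1)` corresponds to the
paper's (1-based) time index `t+1`. -/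
def missCUSUM {p n : ℕ} (M Om : Fin p → Fin n → ℝ) : Fin p → Fin (n - 1) → ℝ :=
  fun j t =>
    if 0 < Lcount Om j ((t : ℕ) + 1) ∧ 0 < Rcount Om j (n - ((t : ℕ) + 1)) then
      Real.sqrt (Lcount Om j ((t : ℕ) + 1) * Rcount Om j (n - ((t : ℕ) + 1)) /
          Lcount Om j n) *
        ((1 / Rcount Om j (n - ((t : ℕ) + 1))) *
            (∑ r : Fin n, if (t : ℕ) + 1 ≤ (r : ℕ) then M j r * Om j r else 0) -
          (1 / Lcount Om j ((t : ℕ) + 1)) *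
            (∑ r : Fin n, if (r : ℕ) < (t : ℕ) + 1 then M j r * Om j r else 0))
    else 0

/-- The ordinary CUSUM transformation: MissCUSUM with everything observed. -/
def cusum {p n : ℕ} (M : Fin p → Fin n → ℝ) : Fin p → Fin (n - 1) → ℝ :=
  missCUSUM M fun _ _ => 1

/-- `τ = n⁻¹ min(z, n−z)`. -/
def tau (n z : ℕ) : ℝ := ((min z (n - z) : ℕ) : ℝ) / (n : ℝ)

/-- The weighted norm `‖θ‖_{2,q}`. -/
def norm2q {p : ℕ} (θ q : Fin p → ℝ) : ℝ := Real.sqrt (∑ j, (θ j) ^ 2 * q j)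

/-- The mean matrix with a single changepoint at (1-based) location `z`. -/
def meanMat {p : ℕ} (n z : ℕ) (μ1 θ : Fin p → ℝ) : Fin p → Fin n → ℝ :=
  fun j t => if (t : ℕ) < z then μ1 j else μ1 j + θ j

/-- A real random variable is Bernoulli(q): {0,1}-valued with success probability `q`. -/
def IsBernoulli {Ω₀ : Type} [MeasurableSpace Ω₀] (P : Measure Ω₀) (Y : Ω₀ → ℝ) (q : ℝ) :
    Prop :=
  Measurable Y ∧ (∀ ω, Y ω = 0 ∨ Y ω = 1) ∧ P {ω | Y ω = 1} = ENNReal.ofReal q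

/-- `(X, Ω) ~ P_{n,p,z,θ,σ,q}`: the single-changepoint Gaussian data matrix with
row-homogeneous Bernoulli missingness, all entries of `X` and `Ω` jointly independent. -/
def IsModel {Ω₀ : Type} [MeasurableSpace Ω₀] (P : Measure Ω₀) {p : ℕ} (n z : ℕ)
    (μ1 θ : Fin p → ℝ) (σ : ℝ) (q : Fin p → ℝ) (X Om : Ω₀ → Fin p → Fin n → ℝ) : Prop :=
  (∀ j t, Measurable fun ω => X ω j t) ∧
  (∀ j t, Measure.map (fun ω => X ω j t) P =
      gaussianReal (meanMat n z μ1 θ j t) (Real.toNNReal (σ ^ 2))) ∧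
  (∀ j t, IsBernoulli P (fun ω => Om ω j t) (q j)) ∧
  iIndepFun
    (fun (i : Fin p × Fin n ⊕ Fin p × Fin n) ω =>
      Sum.elim (fun jt => X ω jt.1 jt.2) (fun jt => Om ω jt.1 jt.2) i) P

/-- The objective function `⟨T, v wᵀ⟩ − λ‖v‖₁`. -/
def objective {p m : ℕ} (T : Fin p → Fin m → ℝ) (lam : ℝ) (v : Fin p → ℝ)
    (w : Fin m → ℝ) : ℝ :=
  (∑ j, ∑ t, T j t * (v j * w t)) - lam * l1norm v

/-- `(v, w)` maximises the objective over the product of closed unit Euclidean balls. -/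
def IsMaxOnBalls {p m : ℕ} (T : Fin p → Fin m → ℝ) (lam : ℝ) (v : Fin p → ℝ)
    (w : Fin m → ℝ) : Prop :=
  l2norm v ≤ 1 ∧ l2norm w ≤ 1 ∧
    ∀ (v' : Fin p → ℝ) (w' : Fin m → ℝ), l2norm v' ≤ 1 → l2norm w' ≤ 1 →
      objective T lam v' w' ≤ objective T lam v w

/-- The submatrix of odd-numbered (1-based) columns. -/
def oddCols {p n : ℕ} (M : Fin p → Fin n → ℝ) : Fin p → Fin (n / 2) → ℝ :=
  fun j t => M j ⟨2 * (t : ℕ), by have := t.isLt; omega⟩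

/-- The submatrix of even-numbered (1-based) columns. -/
def evenCols {p n : ℕ} (M : Fin p → Fin n → ℝ) : Fin p → Fin (n / 2) → ℝ :=
  fun j t => M j ⟨2 * (t : ℕ) + 1, by have := t.isLt; omega⟩

end MissInspect

namespace MissInspect

/-- `Mw`, the matrix–vector product. -/
def mulVecF {p n : ℕ} (M : Fin p → Fin n → ℝ) (w : Fin n → ℝ) : Fin p → ℝ :=
  fun j => ∑ t, M j t * w t

/-- `Mᵀv`, the vector–matrix product. -/
def vecMulF {p n : ℕ} (M : Fin p → Fin n → ℝ) (v : Fin p → ℝ) : Fin n → ℝ :=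
  fun t => ∑ j, M j t * v j

/-- The `2 → ∞` operator norm `sup{‖Mw‖∞ : ‖w‖₂ ≤ 1}`. -/
def norm2toInf {p n : ℕ} (M : Fin p → Fin n → ℝ) : ℝ :=
  sSup {x | ∃ w : Fin n → ℝ, l2norm w ≤ 1 ∧ x = linfNorm (mulVecF M w)}

/-- The soft-thresholding function. -/
def soft {d : ℕ} (v : Fin d → ℝ) (lam : ℝ) : Fin d → ℝ :=
  fun j => Real.sign (v j) * max (|v j| - lam) 0


section AuxLemmas

variable {d : ℕ}

lemma sum_sq_nonneg' (v : Fin d → ℝ) : 0 ≤ ∑ i, (v i) ^ 2 :=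
  Finset.sum_nonneg fun i _ => sq_nonneg _

lemma l2norm_nonneg' (v : Fin d → ℝ) : 0 ≤ l2norm v := Real.sqrt_nonneg _

lemma l2norm_sq' (v : Fin d → ℝ) : (l2norm v) ^ 2 = ∑ i, (v i) ^ 2 :=
  Real.sq_sqrt (sum_sq_nonneg' v)

lemma l2norm_pos' {v : Fin d → ℝ} (hv : v ≠ 0) : 0 < l2norm v := by
  obtain ⟨i, hi⟩ := Function.ne_iff.mp hv
  apply Real.sqrt_pos.mpr
  have h1 : (0:ℝ) < (v i) ^ 2 := by
    rw [← sq_abs]; exact pow_pos (abs_pos.mpr hi) 2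
  exact lt_of_lt_of_le h1
    (Finset.single_le_sum (fun i _ => sq_nonneg (v i)) (Finset.mem_univ i))

lemma cs' (a c : Fin d → ℝ) : ∑ i, a i * c i ≤ l2norm a * l2norm c := by
  have h := Finset.sum_mul_sq_le_sq_mul_sq Finset.univ a c
  calc ∑ i, a i * c i ≤ |∑ i, a i * c i| := le_abs_self _
    _ = Real.sqrt ((∑ i, a i * c i) ^ 2) := (Real.sqrt_sq_eq_abs _).symm
    _ ≤ Real.sqrt ((∑ i, (a i) ^ 2) * ∑ i, (c i) ^ 2) := Real.sqrt_le_sqrt h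
    _ = l2norm a * l2norm c := Real.sqrt_mul (sum_sq_nonneg' a) _

lemma cs_eq' {a c : Fin d → ℝ} (ha : 0 < l2norm a) (hc : l2norm c ≤ 1)
    (heq : ∑ i, a i * c i = l2norm a) : c = fun i => a i / l2norm a := by
  set N := l2norm a with hN
  have hc2 : ∑ i, (c i) ^ 2 ≤ 1 := by
    have h1 := l2norm_sq' c
    nlinarith [l2norm_nonneg' c]
  have e : ∑ i, (N * c i - a i) ^ 2
      = N ^ 2 * (∑ i, (c i) ^ 2) - 2 * N * (∑ i, a i * c i) + ∑ i, (a i) ^ 2 := by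
    rw [Finset.mul_sum, Finset.mul_sum, ← Finset.sum_sub_distrib, ← Finset.sum_add_distrib]
    exact Finset.sum_congr rfl fun i _ => by ring
  rw [heq, ← l2norm_sq' a, ← hN] at e
  have hle : ∑ i, (N * c i - a i) ^ 2 ≤ 0 := by nlinarith
  have hz : ∀ i ∈ Finset.univ, (N * c i - a i) ^ 2 = 0 := by
    rw [← Finset.sum_eq_zero_iff_of_nonneg (fun i _ => sq_nonneg _)]
    exact le_antisymm hle (Finset.sum_nonneg fun i _ => sq_nonneg _)
  funext i
  have h2 : N * c i - a i = 0 := by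
    have := hz i (Finset.mem_univ i)
    exact sub_eq_zero.mpr (by nlinarith [sq_nonneg (N * c i - a i)])
  rw [eq_div_iff ha.ne']
  linarith

lemma abs_sign' {x : ℝ} (hx : x ≠ 0) : |Real.sign x| = 1 := by
  rcases hx.lt_or_gt with h | h
  · simp [Real.sign_of_neg h]
  · simp [Real.sign_of_pos h]

lemma sign_mul_self' (x : ℝ) : Real.sign x * x = |x| := by
  rcases lt_trichotomy x 0 with h | h | h
  · rw [Real.sign_of_neg h, abs_of_neg h]; ring
  · simp [h]
  · rw [Real.sign_of_pos h, abs_of_pos h]; ring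

lemma obj_eq1 {p n : ℕ} (M : Fin p → Fin n → ℝ) (lam : ℝ) (v : Fin p → ℝ) (w : Fin n → ℝ) :
    objective M lam v w = ∑ j, (mulVecF M w j * v j - lam * |v j|) := by
  unfold objective l1norm mulVecF
  rw [Finset.mul_sum, ← Finset.sum_sub_distrib]
  refine Finset.sum_congr rfl fun j _ => ?_
  congr 1
  rw [Finset.sum_mul]
  exact Finset.sum_congr rfl fun t _ => by ring

lemma obj_eq2 {p n : ℕ} (M : Fin p → Fin n → ℝ) (lam : ℝ) (v : Fin p → ℝ) (w : Fin n → ℝ) :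
    objective M lam v w = (∑ t, vecMulF M v t * w t) - lam * l1norm v := by
  unfold objective vecMulF
  congr 1
  rw [Finset.sum_comm]
  refine Finset.sum_congr rfl fun t _ => ?_
  rw [Finset.sum_mul]
  exact Finset.sum_congr rfl fun j _ => by ring

lemma abs_soft' (b : Fin d → ℝ) {lam : ℝ} (hlam : 0 < lam) (j : Fin d) :
    |soft b lam j| = max (|b j| - lam) 0 := by
  unfold soft
  rcases eq_or_ne (b j) 0 with h | h
  · rw [h, Real.sign_zero, zero_mul, abs_zero,
      max_eq_right (by linarith : (0:ℝ) - lam ≤ 0)]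
  · rw [abs_mul, abs_sign' h, one_mul, abs_of_nonneg (le_max_right _ _)]

lemma soft_term' (b : Fin d → ℝ) {lam : ℝ} (hlam : 0 < lam) (j : Fin d) :
    b j * soft b lam j - lam * |soft b lam j| = (soft b lam j) ^ 2 := by
  rcases le_or_gt (|b j| - lam) 0 with h | h
  · have h0 : soft b lam j = 0 := by unfold soft; rw [max_eq_right h, mul_zero]
    simp [h0]
  · have hm : max (|b j| - lam) 0 = |b j| - lam := max_eq_left h.le
    have habs : |soft b lam j| = |b j| - lam := by rw [abs_soft' b hlam j, hm]
    have hsq : (soft b lam j) ^ 2 = (|b j| - lam) ^ 2 := by rw [← sq_abs, habs]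
    have hbs : b j * soft b lam j = |b j| * (|b j| - lam) := by
      unfold soft
      rw [hm, ← mul_assoc, mul_comm (b j) (Real.sign (b j)), sign_mul_self']
    rw [hbs, habs, hsq]; ring

lemma term_le' (b : Fin d → ℝ) {lam : ℝ} (hlam : 0 < lam) (j : Fin d) (x : ℝ) :
    b j * x - lam * |x| ≤ |soft b lam j| * |x| := by
  rw [abs_soft' b hlam j]
  have h1 : b j * x ≤ |b j| * |x| := by rw [← abs_mul]; exact le_abs_self _
  have h2 : (|b j| - lam) * |x| ≤ max (|b j| - lam) 0 * |x| :=
    mul_le_mul_of_nonneg_right (le_max_left _ _) (abs_nonneg x)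
  nlinarith

end AuxLemmas

/-- Lemma 1, case `‖M‖_{2→∞} > λ`: fixed-point characterisation of the maximiser. -/
theorem statement_9 (p n : ℕ) (M : Fin p → Fin n → ℝ) (lam : ℝ) (hlam : 0 < lam)
    (vstar : Fin p → ℝ) (wstar : Fin n → ℝ) (hmax : IsMaxOnBalls M lam vstar wstar)
    (hgt : lam < norm2toInf M) :
    soft (mulVecF M wstar) lam ≠ 0 ∧ vecMulF M vstar ≠ 0 ∧
      vstar = (fun j => soft (mulVecF M wstar) lam j / l2norm (soft (mulVecF M wstar) lam)) ∧
      wstar = (fun t => vecMulF M vstar t / l2norm (vecMulF M vstar)) := by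
  obtain ⟨hv1, hw1, hopt⟩ := hmax
  set b := mulVecF M wstar with hb
  set s := soft b lam with hs
  -- Step A : the optimal value is positive
  have hval : 0 < objective M lam vstar wstar := by
    have hne : {x | ∃ w : Fin n → ℝ, l2norm w ≤ 1 ∧ x = linfNorm (mulVecF M w)}.Nonempty := by
      refine ⟨linfNorm (mulVecF M (0 : Fin n → ℝ)), 0, ?_, rfl⟩
      unfold l2norm
      simp
    obtain ⟨x, ⟨w₀, hw₀, rfl⟩, hx⟩ := exists_lt_of_lt_csSup hne hgt
    unfold linfNorm at hx
    haveI hpne : Nonempty (Fin p) := by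
      rcases isEmpty_or_nonempty (Fin p) with h | h
      · exfalso; rw [Real.iSup_of_isEmpty] at hx; linarith
      · exact h
    obtain ⟨j, hj⟩ := exists_lt_of_lt_ciSup hx
    set b₀ := mulVecF M w₀ with hb₀
    have hbj : b₀ j ≠ 0 := by
      intro h0; rw [h0, abs_zero] at hj; linarith
    set v₀ : Fin p → ℝ := fun i => if i = j then Real.sign (b₀ j) else 0 with hv₀
    have hsgn2 : (Real.sign (b₀ j)) ^ 2 = 1 := by
      rw [← sq_abs, abs_sign' hbj]; norm_num
    have hl2v₀ : l2norm v₀ = 1 := by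
      unfold l2norm
      have h1 : ∀ i, (v₀ i) ^ 2 = if i = j then 1 else 0 := by
        intro i
        by_cases h : i = j
        · simp [hv₀, h, hsgn2]
        · simp [hv₀, h]
      rw [Finset.sum_congr rfl fun i _ => h1 i]
      simp
    have hl1v₀ : l1norm v₀ = 1 := by
      unfold l1norm
      have h1 : ∀ i, |v₀ i| = if i = j then 1 else 0 := by
        intro i
        by_cases h : i = j
        · simp [hv₀, h, abs_sign' hbj]
        · simp [hv₀, h]
      rw [Finset.sum_congr rfl fun i _ => h1 i]
      simp
    have hobj : objective M lam v₀ w₀ = |b₀ j| - lam := by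
      rw [obj_eq1]
      have h1 : ∀ i, b₀ i * v₀ i - lam * |v₀ i| = if i = j then |b₀ j| - lam else 0 := by
        intro i
        by_cases h : i = j
        · subst h
          simp only [hv₀, if_pos rfl]
          rw [mul_comm (b₀ i) (Real.sign (b₀ i)), sign_mul_self', abs_sign' hbj, mul_one]
          simp
        · simp [hv₀, h]
      rw [Finset.sum_congr rfl fun i _ => h1 i]
      simp
    have hle := hopt v₀ w₀ (le_of_eq hl2v₀) hw₀
    rw [hobj] at hle
    linarith
  have hvalsum : objective M lam vstar wstar = ∑ j, (b j * vstar j - lam * |vstar j|) :=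
    obj_eq1 M lam vstar wstar
  have hterm : ∀ j, b j * vstar j - lam * |vstar j| ≤ |s j| * |vstar j| :=
    fun j => term_le' b hlam j _
  -- Step B : s ≠ 0
  have hs0 : s ≠ 0 := by
    intro h0
    have hle : objective M lam vstar wstar ≤ 0 := by
      rw [hvalsum]
      refine Finset.sum_nonpos fun j _ => ?_
      have h1 := hterm j
      rw [h0] at h1
      simpa using h1
    linarith
  set N := l2norm s with hN
  have hNpos : 0 < N := l2norm_pos' hs0
  have e1 : l2norm (fun j => |s j|) = N := by
    rw [hN]; unfold l2norm; simp [sq_abs]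
  have habs_v : l2norm (fun j => |vstar j|) = l2norm vstar := by
    unfold l2norm; simp [sq_abs]
  -- upper bound chain
  have h1 : ∑ j, |s j| * |vstar j| ≤ N := by
    calc ∑ j, |s j| * |vstar j|
        ≤ l2norm (fun j => |s j|) * l2norm (fun j => |vstar j|) := cs' _ _
      _ = N * l2norm vstar := by rw [e1, habs_v]
      _ ≤ N * 1 := mul_le_mul_of_nonneg_left hv1 hNpos.le
      _ = N := mul_one N
  -- lower bound : plug in v = s / N
  have hlow : N ≤ objective M lam vstar wstar := by
    have hl2 : l2norm (fun j => s j / N) = 1 := by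
      unfold l2norm
      have h2 : ∑ j, (s j / N) ^ 2 = (∑ j, (s j) ^ 2) / N ^ 2 := by
        rw [Finset.sum_div]
        exact Finset.sum_congr rfl fun j _ => by rw [div_pow]
      rw [h2, ← l2norm_sq' s, ← hN, div_self (by positivity), Real.sqrt_one]
    have hle := hopt (fun j => s j / N) wstar (le_of_eq hl2) hw1
    have e : objective M lam (fun j => s j / N) wstar = N := by
      rw [obj_eq1]
      have h3 : ∀ j, b j * (s j / N) - lam * |s j / N| = (s j) ^ 2 / N := by
        intro j
        rw [abs_div, abs_of_pos hNpos]
        have h4 := soft_term' b hlam j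
        rw [← hs] at h4
        field_simp
        linarith
      rw [Finset.sum_congr rfl fun j _ => h3 j, ← Finset.sum_div, ← l2norm_sq' s, ← hN, sq,
        mul_div_assoc, div_self hNpos.ne', mul_one]
    linarith
  have hup : objective M lam vstar wstar ≤ N := by
    rw [hvalsum]
    calc ∑ j, (b j * vstar j - lam * |vstar j|)
        ≤ ∑ j, |s j| * |vstar j| := Finset.sum_le_sum fun j _ => hterm j
      _ ≤ N := h1
  have hvalN : objective M lam vstar wstar = N := le_antisymm hup hlow
  have hsum2 : ∑ j, |s j| * |vstar j| = N := by
    refine le_antisymm h1 ?_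
    calc N = ∑ j, (b j * vstar j - lam * |vstar j|) := by rw [← hvalsum, hvalN]
      _ ≤ ∑ j, |s j| * |vstar j| := Finset.sum_le_sum fun j _ => hterm j
  have habs : (fun j => |vstar j|) = fun j => |s j| / l2norm (fun j => |s j|) := by
    refine cs_eq' (by rw [e1]; exact hNpos) (by rw [habs_v]; exact hv1) ?_
    rw [e1]; exact hsum2
  have hte : ∀ j, b j * vstar j - lam * |vstar j| = |s j| * |vstar j| := by
    have h5 := (Finset.sum_eq_sum_iff_of_le (fun j (_ : j ∈ Finset.univ) => hterm j)).mp
      (by rw [← hvalsum, hvalN, hsum2])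
    exact fun j => h5 j (Finset.mem_univ j)
  -- conclude vstar = s / N
  have hvstar : vstar = fun j => s j / N := by
    funext j
    have habsj : |vstar j| = |s j| / N := by
      have := congrFun habs j
      rwa [e1] at this
    rcases eq_or_ne (s j) 0 with h0 | h0
    · have hz : |vstar j| = 0 := by rw [habsj, h0, abs_zero, zero_div]
      rw [abs_eq_zero.mp hz, h0, zero_div]
    · have hsj : 0 < |s j| := abs_pos.mpr h0
      have hmaxpos : 0 < max (|b j| - lam) 0 := by
        rw [← abs_soft' b hlam j, ← hs]; exact hsj
      have hmax : max (|b j| - lam) 0 = |b j| - lam := by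
        rcases le_or_gt (|b j| - lam) 0 with h | h
        · exfalso; rw [max_eq_right h] at hmaxpos; exact lt_irrefl _ hmaxpos
        · exact max_eq_left h.le
      have habs_s : |s j| = |b j| - lam := by rw [hs, abs_soft' b hlam j, hmax]
      have hbj : 0 < |b j| := by linarith
      have hbv : b j * vstar j = |b j| * |vstar j| := by
        have h6 := hte j
        rw [habs_s] at h6
        linear_combination h6
      have hvpos : 0 < |vstar j| := by rw [habsj]; positivity
      have hsign : s j = Real.sign (b j) * |s j| := by
        rw [habs_s, hs]
        show Real.sign (b j) * max (|b j| - lam) 0 = _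
        rw [hmax]
      rcases lt_trichotomy (b j) 0 with hB | hB | hB
      · have h4 : b j * (vstar j + |vstar j|) = 0 := by
          rw [abs_of_neg hB] at hbv
          linear_combination hbv
        have h3 : vstar j + |vstar j| = 0 := (mul_eq_zero.mp h4).resolve_left hB.ne
        rw [hsign, Real.sign_of_neg hB]
        rw [habsj] at h3
        have h7 : -1 * |s j| / N = -(|s j| / N) := by ring
        rw [h7]
        linarith
      · exfalso; rw [hB, abs_zero] at hbj; exact lt_irrefl _ hbj
      · have h4 : b j * (vstar j - |vstar j|) = 0 := by
          rw [abs_of_pos hB] at hbv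
          linear_combination hbv
        have h3 : vstar j - |vstar j| = 0 := (mul_eq_zero.mp h4).resolve_left hB.ne'
        rw [hsign, Real.sign_of_pos hB, one_mul]
        rw [habsj] at h3
        linarith
  -- Step D : the w part
  have hd0 : vecMulF M vstar ≠ 0 := by
    intro h0
    have hle : objective M lam vstar wstar ≤ 0 := by
      rw [obj_eq2, h0]
      simp only [Pi.zero_apply, zero_mul, Finset.sum_const_zero, zero_sub, neg_nonpos]
      exact mul_nonneg hlam.le (Finset.sum_nonneg fun j _ => abs_nonneg _)
    linarith
  have hNd : 0 < l2norm (vecMulF M vstar) := l2norm_pos' hd0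
  set dvec := vecMulF M vstar with hdv
  set Nd := l2norm dvec with hNdd
  have hup2 : ∑ t, dvec t * wstar t ≤ Nd := by
    calc ∑ t, dvec t * wstar t ≤ l2norm dvec * l2norm wstar := cs' _ _
      _ ≤ Nd * 1 := mul_le_mul_of_nonneg_left hw1 hNd.le
      _ = Nd := mul_one Nd
  have hlow2 : Nd ≤ ∑ t, dvec t * wstar t := by
    have hl2 : l2norm (fun t => dvec t / Nd) = 1 := by
      unfold l2norm
      have h2 : ∑ t, (dvec t / Nd) ^ 2 = (∑ t, (dvec t) ^ 2) / Nd ^ 2 := by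
        rw [Finset.sum_div]
        exact Finset.sum_congr rfl fun t _ => by rw [div_pow]
      rw [h2, ← l2norm_sq' dvec, ← hNdd, div_self (by positivity), Real.sqrt_one]
    have hle := hopt vstar (fun t => dvec t / Nd) hv1 (le_of_eq hl2)
    rw [obj_eq2, obj_eq2] at hle
    have e : ∑ t, dvec t * (dvec t / Nd) = Nd := by
      have h3 : ∀ t, dvec t * (dvec t / Nd) = (dvec t) ^ 2 / Nd := fun t => by ring
      rw [Finset.sum_congr rfl fun t _ => h3 t, ← Finset.sum_div, ← l2norm_sq' dvec, ← hNdd,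
        sq, mul_div_assoc, div_self hNd.ne', mul_one]
    rw [← hdv] at hle
    linarith [hle, e]
  have heq2 : ∑ t, dvec t * wstar t = Nd := le_antisymm hup2 hlow2
  have hwstar : wstar = fun t => dvec t / Nd := cs_eq' hNd hw1 heq2
  exact ⟨hs0, hd0, hvstar, hwstar⟩

end MissInspect
end
end

section
/- For any 1 ≤ z₁ < z₂ ≤ n−1, the total variation distance between the two single-changepoint laws satisfies 1 − d_TV(P_{n,p,z₁,θ,σ,q}, P_{n,p,z₂,θ,σ,q}) ≥ ∏_{j : θ_j ≠ 0} (1 − q_j)^{z₂ − z₁}. -/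
open MeasureTheory ProbabilityTheory

noncomputable section

namespace MissInspect

open MeasureTheory ProbabilityTheory

/-- The Bernoulli(q) law on ℝ, supported on {0,1}. -/
def bernMeasure (q : ℝ) : Measure ℝ :=
  ENNReal.ofReal q • Measure.dirac 1 + ENNReal.ofReal (1 - q) • Measure.dirac 0

instance (q : ℝ) : IsFiniteMeasure (bernMeasure q) := by
  constructor
  simp only [bernMeasure, Measure.coe_add, Measure.coe_smul, Pi.add_apply, Pi.smul_apply,
    smul_eq_mul]
  exact ENNReal.add_lt_top.mpr
    ⟨ENNReal.mul_lt_top ENNReal.ofReal_lt_top (measure_lt_top _ _),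
      ENNReal.mul_lt_top ENNReal.ofReal_lt_top (measure_lt_top _ _)⟩

/-- The joint law of `(X, Ω)` under `P_{n,p,z,θ,σ,q}` (with pre-change mean `μ1`). -/
def fullLaw {p : ℕ} (n z : ℕ) (μ1 θ : Fin p → ℝ) (σ : ℝ) (q : Fin p → ℝ) :
    Measure ((Fin p → Fin n → ℝ) × (Fin p → Fin n → ℝ)) :=
  (Measure.pi fun j => Measure.pi fun t =>
      gaussianReal (meanMat n z μ1 θ j t) (Real.toNNReal (σ ^ 2))).prod
    (Measure.pi fun j => Measure.pi fun _t => bernMeasure (q j))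

/-- The joint law of `(X ∘ Ω, Ω)` under `P_{n,p,z,θ,σ,q}`. -/
def obsLaw {p : ℕ} (n z : ℕ) (μ1 θ : Fin p → ℝ) (σ : ℝ) (q : Fin p → ℝ) :
    Measure ((Fin p → Fin n → ℝ) × (Fin p → Fin n → ℝ)) :=
  Measure.map (fun xo => (hadamard xo.1 xo.2, xo.2)) (fullLaw n z μ1 θ σ q)

end MissInspect

namespace MissInspect

open MeasureTheory ProbabilityTheory

/-- The total variation distance `sup_B |P(B) − Q(B)|`. -/
def tvDist {α : Type} [MeasurableSpace α] (μ ν : Measure α) : ℝ :=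
  sSup {x | ∃ B, MeasurableSet B ∧ x = |(μ B).toReal - (ν B).toReal|}

/-- Lower bound on the testing affinity between two single-changepoint laws. -/
theorem statement_18 (n p : ℕ) (hn : 2 ≤ n)
    (μ1 θ : Fin p → ℝ) (hθ : θ ≠ 0)
    (σ : ℝ) (hσ : 0 < σ) (q : Fin p → ℝ) (hq : ∀ j, 0 < q j ∧ q j ≤ 1)
    (z₁ z₂ : ℕ) (hz1 : 1 ≤ z₁) (hz12 : z₁ < z₂) (hz2 : z₂ ≤ n - 1) :
    ∏ j ∈ Finset.univ.filter (fun j => θ j ≠ 0), (1 - q j) ^ (z₂ - z₁) ≤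
      1 - tvDist (obsLaw n z₁ μ1 θ σ q) (obsLaw n z₂ μ1 θ σ q) := by
  classical
  set v : NNReal := Real.toNNReal (σ ^ 2) with hv
  have hz2n : z₂ < n := lt_of_le_of_lt hz2 (by omega)
  -- Bernoulli measures are probability measures
  haveI ibern : ∀ j : Fin p, IsProbabilityMeasure (bernMeasure (q j)) := by
    intro j
    constructor
    have h0 : 0 ≤ q j := (hq j).1.le
    have h1 : (0:ℝ) ≤ 1 - q j := by linarith [(hq j).2]
    simp [bernMeasure, ← ENNReal.ofReal_add h0 h1]
  have hbern0 : ∀ j : Fin p, bernMeasure (q j) {0} = ENNReal.ofReal (1 - q j) := by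
    intro j
    simp [bernMeasure, Measure.dirac_apply' _ (measurableSet_singleton (0:ℝ))]
  haveI ifull1 : IsProbabilityMeasure (fullLaw n z₁ μ1 θ σ q) := by
    unfold fullLaw; infer_instance
  haveI ifull2 : IsProbabilityMeasure (fullLaw n z₂ μ1 θ σ q) := by
    unfold fullLaw; infer_instance
  -- the key predicate and event
  set C : Fin p → Fin n → Prop := fun j t => θ j ≠ 0 ∧ z₁ ≤ (t : ℕ) ∧ (t : ℕ) < z₂ with hCdef
  set s : Fin p → Fin n → Set ℝ := fun j t => if C j t then {0} else Set.univ with hsdef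
  set Sω : Set (Fin p → Fin n → ℝ) :=
    Set.pi Set.univ fun j => Set.pi Set.univ (s j) with hSdef
  set A : Set ((Fin p → Fin n → ℝ) × (Fin p → Fin n → ℝ)) := Set.univ ×ˢ Sω with hAdef
  have hsmeas : ∀ j t, MeasurableSet (s j t) := by
    intro j t
    simp only [hsdef]
    split
    · exact measurableSet_singleton 0
    · exact MeasurableSet.univ
  have hSmeas : MeasurableSet Sω :=
    MeasurableSet.univ_pi fun j => MeasurableSet.univ_pi (hsmeas j)
  have hA : MeasurableSet A := MeasurableSet.univ.prod hSmeas
  have hAmem : ∀ mo : (Fin p → Fin n → ℝ) × (Fin p → Fin n → ℝ),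
      mo ∈ A ↔ ∀ j t, C j t → mo.2 j t = 0 := by
    intro mo
    simp only [hAdef, Set.mem_prod, Set.mem_univ, true_and, hSdef, Set.mem_pi, hsdef]
    constructor
    · intro h j t hc
      have := h j (Set.mem_univ j) t (Set.mem_univ t)
      rwa [if_pos hc, Set.mem_singleton_iff] at this
    · intro h j _ t _
      split_ifs with hc
      · exact h j t hc
      · trivial
  -- the measurable map F
  set Fm : (Fin p → Fin n → ℝ) × (Fin p → Fin n → ℝ) →
      (Fin p → Fin n → ℝ) × (Fin p → Fin n → ℝ) :=
    fun xo => (hadamard xo.1 xo.2, xo.2) with hFdef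
  have hF : Measurable Fm := by
    simp only [hFdef]; unfold hadamard; fun_prop
  have hFA : Fm ⁻¹' A = A := by
    ext mo
    rw [Set.mem_preimage, hAmem, hAmem]
  haveI iobs1 : IsProbabilityMeasure (obsLaw n z₁ μ1 θ σ q) := by
    unfold obsLaw; exact Measure.isProbabilityMeasure_map hF.aemeasurable
  haveI iobs2 : IsProbabilityMeasure (obsLaw n z₂ μ1 θ σ q) := by
    unfold obsLaw; exact Measure.isProbabilityMeasure_map hF.aemeasurable
  -- the mean-shift map is measure preserving from z₂-law to z₁-law
  have hco : ∀ (j : Fin p) (t : Fin n),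
      MeasurePreserving (fun r : ℝ => if C j t then r + θ j else r)
        (gaussianReal (meanMat n z₂ μ1 θ j t) v) (gaussianReal (meanMat n z₁ μ1 θ j t) v) := by
    intro j t
    by_cases hc : C j t
    · simp only [if_pos hc]
      have hm2 : meanMat n z₂ μ1 θ j t = μ1 j := by
        simp [meanMat, hc.2.2]
      have hm1 : meanMat n z₁ μ1 θ j t = μ1 j + θ j := by
        simp [meanMat, Nat.not_lt.mpr hc.2.1]
      rw [hm1, hm2]
      exact ⟨measurable_id.add_const _, gaussianReal_map_add_const _⟩
    · simp only [if_neg hc]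
      have hmm : meanMat n z₂ μ1 θ j t = meanMat n z₁ μ1 θ j t := by
        simp only [hCdef] at hc
        push_neg at hc
        by_cases h0 : θ j = 0
        · simp [meanMat, h0]
        · by_cases hlt : (t : ℕ) < z₁
          · simp [meanMat, hlt, lt_trans hlt hz12]
          · have h2 : z₂ ≤ (t : ℕ) := hc h0 (Nat.not_lt.mp hlt)
            simp [meanMat, Nat.not_lt.mpr h2, hlt,
              Nat.not_lt.mpr (le_trans (le_of_lt hz12) h2)]
      rw [hmm]
      exact MeasurePreserving.id _
  have h1 : MeasurePreserving
      (fun (x : Fin p → Fin n → ℝ) (j : Fin p) (t : Fin n) =>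
        if C j t then x j t + θ j else x j t)
      (Measure.pi fun j => Measure.pi fun t => gaussianReal (meanMat n z₂ μ1 θ j t) v)
      (Measure.pi fun j => Measure.pi fun t => gaussianReal (meanMat n z₁ μ1 θ j t) v) :=
    measurePreserving_pi _ _ (fun j => measurePreserving_pi _ _ (fun t => hco j t))
  set ψ : (Fin p → Fin n → ℝ) × (Fin p → Fin n → ℝ) →
      (Fin p → Fin n → ℝ) × (Fin p → Fin n → ℝ) :=
    Prod.map (fun (x : Fin p → Fin n → ℝ) (j : Fin p) (t : Fin n) =>
        if C j t then x j t + θ j else x j t) id with hψdef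
  have hψ : MeasurePreserving ψ (fullLaw n z₂ μ1 θ σ q) (fullLaw n z₁ μ1 θ σ q) := by
    unfold fullLaw
    exact h1.prod (MeasurePreserving.id _)
  -- on A, F ∘ ψ = F and ψ fixes A
  have hψA : ∀ w, ψ w ∈ A ↔ w ∈ A := by
    intro w
    rw [hAmem, hAmem]
    exact Iff.rfl
  have hFψ : ∀ w, w ∈ A → Fm (ψ w) = Fm w := by
    intro w hw
    simp only [hψdef, hFdef, Prod.map, id]
    refine Prod.ext ?_ rfl
    funext j t
    simp only [hadamard]
    by_cases hc : C j t
    · rw [(hAmem w).mp hw j t hc]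
      ring
    · rw [if_neg hc]
  -- the two laws agree on subsets of A
  have hkey : ∀ B, MeasurableSet B →
      obsLaw n z₁ μ1 θ σ q (B ∩ A) = obsLaw n z₂ μ1 θ σ q (B ∩ A) := by
    intro B hB
    unfold obsLaw
    rw [Measure.map_apply hF (hB.inter hA), Measure.map_apply hF (hB.inter hA)]
    have hpre : Fm ⁻¹' (B ∩ A) = Fm ⁻¹' B ∩ A := by
      rw [Set.preimage_inter, hFA]
    rw [hpre]
    have hmeas : MeasurableSet (Fm ⁻¹' B ∩ A) := (hF hB).inter hA
    rw [← hψ.measure_preimage hmeas.nullMeasurableSet]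
    congr 1
    ext w
    simp only [Set.mem_preimage, Set.mem_inter_iff]
    constructor
    · rintro ⟨h₁, h₂⟩
      have hwA : w ∈ A := (hψA w).mp h₂
      refine ⟨?_, hwA⟩
      rw [← hFψ w hwA]
      exact h₁
    · rintro ⟨h₁, h₂⟩
      refine ⟨?_, (hψA w).mpr h₂⟩
      rw [hFψ w h₂]
      exact h₁
  -- the mass of A
  set r : ℝ := ∏ j ∈ Finset.univ.filter (fun j => θ j ≠ 0), (1 - q j) ^ (z₂ - z₁) with hrdef
  have hfac01 : ∀ j : Fin p, 0 ≤ (1 - q j) ^ (z₂ - z₁) ∧ (1 - q j) ^ (z₂ - z₁) ≤ 1 := by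
    intro j
    constructor
    · exact pow_nonneg (by linarith [(hq j).2]) _
    · exact pow_le_one₀ (by linarith [(hq j).2]) (by linarith [(hq j).1])
  have hr0 : 0 ≤ r := Finset.prod_nonneg fun j _ => (hfac01 j).1
  have hr1 : r ≤ 1 := Finset.prod_le_one (fun j _ => (hfac01 j).1) (fun j _ => (hfac01 j).2)
  have hcard : (Finset.univ.filter fun t : Fin n => z₁ ≤ (t : ℕ) ∧ (t : ℕ) < z₂).card
      = z₂ - z₁ := by
    have he : (Finset.univ.filter fun t : Fin n => z₁ ≤ (t : ℕ) ∧ (t : ℕ) < z₂)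
        = (Finset.Ico z₁ z₂).attachFin
          (fun m hm => lt_of_lt_of_le (Finset.mem_Ico.mp hm).2 (le_of_lt hz2n)) := by
      ext t
      simp [Finset.mem_attachFin, Finset.mem_Ico]
    rw [he, Finset.card_attachFin, Nat.card_Ico]
  have hmass : ∀ z : ℕ, obsLaw n z μ1 θ σ q A = ENNReal.ofReal r := by
    intro z
    unfold obsLaw
    rw [Measure.map_apply hF hA, hFA]
    unfold fullLaw
    rw [hAdef, Measure.prod_prod, measure_univ, one_mul, hSdef, Measure.pi_pi]
    have hrow : ∀ j : Fin p,
        (Measure.pi fun _t : Fin n => bernMeasure (q j)) (Set.pi Set.univ (s j))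
          = if θ j ≠ 0 then ENNReal.ofReal (1 - q j) ^ (z₂ - z₁) else 1 := by
      intro j
      rw [Measure.pi_pi]
      have hb : ∀ t : Fin n, bernMeasure (q j) (s j t)
          = if C j t then ENNReal.ofReal (1 - q j) else 1 := by
        intro t
        simp only [hsdef]
        split_ifs with hc
        · exact hbern0 j
        · exact measure_univ
      simp only [hb]
      rw [← Finset.prod_filter, Finset.prod_const]
      by_cases h0 : θ j ≠ 0
      · rw [if_pos h0]
        congr 1
        rw [← hcard]
        congr 1
        ext t
        simp [hCdef, h0]
      · rw [if_neg h0]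
        have : (Finset.univ.filter fun t : Fin n => C j t) = ∅ := by
          ext t
          simp only [Finset.mem_filter, Finset.mem_univ, true_and, Finset.notMem_empty,
            iff_false, hCdef]
          tauto
        rw [this, Finset.card_empty, pow_zero]
    simp only [hrow]
    rw [← Finset.prod_filter, hrdef,
      ENNReal.ofReal_prod_of_nonneg (fun j _ => (hfac01 j).1)]
    refine Finset.prod_congr rfl fun j hj => ?_
    exact (ENNReal.ofReal_pow (by linarith [(hq j).2] : (0:ℝ) ≤ 1 - q j) _).symm
  -- conclude
  have htv : tvDist (obsLaw n z₁ μ1 θ σ q) (obsLaw n z₂ μ1 θ σ q) ≤ 1 - r := by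
    apply Real.sSup_le
    · rintro x ⟨B, hB, rfl⟩
      set P := obsLaw n z₁ μ1 θ σ q
      set Q := obsLaw n z₂ μ1 θ σ q
      have hPsplit : P B = P (B ∩ A) + P (B \ A) := (measure_inter_add_diff B hA).symm
      have hQsplit : Q B = Q (B ∩ A) + Q (B \ A) := (measure_inter_add_diff B hA).symm
      have hcompl : ∀ (μ : Measure ((Fin p → Fin n → ℝ) × (Fin p → Fin n → ℝ)))
          (_ : IsProbabilityMeasure μ) (_ : μ A = ENNReal.ofReal r),
          (μ (B \ A)).toReal ≤ 1 - r := by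
        intro μ hprob hμA
        have hle : μ (B \ A) ≤ μ Aᶜ := measure_mono fun w hw => hw.2
        have hAc : μ Aᶜ = 1 - ENNReal.ofReal r := by
          rw [prob_compl_eq_one_sub hA, hμA]
        calc (μ (B \ A)).toReal ≤ (μ Aᶜ).toReal :=
              ENNReal.toReal_mono (measure_ne_top _ _) hle
          _ = 1 - r := by
              rw [hAc, ENNReal.toReal_sub_of_le (ENNReal.ofReal_le_one.mpr hr1)
                ENNReal.one_ne_top, ENNReal.toReal_one, ENNReal.toReal_ofReal hr0]
      have hPQ : (P (B ∩ A)).toReal = (Q (B ∩ A)).toReal := by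
        rw [hkey B hB]
      have h1' : (P B).toReal = (P (B ∩ A)).toReal + (P (B \ A)).toReal := by
        rw [hPsplit, ENNReal.toReal_add (measure_ne_top _ _) (measure_ne_top _ _)]
      have h2' : (Q B).toReal = (Q (B ∩ A)).toReal + (Q (B \ A)).toReal := by
        rw [hQsplit, ENNReal.toReal_add (measure_ne_top _ _) (measure_ne_top _ _)]
      have hb : (P (B \ A)).toReal ≤ 1 - r := hcompl P iobs1 (hmass z₁)
      have hc : (Q (B \ A)).toReal ≤ 1 - r := hcompl Q iobs2 (hmass z₂)
      have hb0 : 0 ≤ (P (B \ A)).toReal := ENNReal.toReal_nonneg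
      have hc0 : 0 ≤ (Q (B \ A)).toReal := ENNReal.toReal_nonneg
      rw [abs_le]
      constructor <;> [skip; skip] <;> rw [h1', h2', hPQ] <;> linarith
    · linarith
  linarith


end MissInspect
end
end
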